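/- For all real k with |k| ≤ π, all γ̄ ∈ [0,1], and all real 𝔠 (𝔠 = c/(2d)), the complex number z = 1 + γ̄[−(1 + 𝔠²)sin²(k/2) − 2i𝔠 sin(k/2)cos(k/2)] has a principal square root with 0 ≤ Re√z ≤ 1 when γ̄(1+𝔠²)sin²(k/2) along with the imaginary part keep z in the slit plane; in particular the eigenvalues λ_{1,3} = 2d(−1 ± √z) satisfy Re λ₁ ≤ 0 and Re λ₃ ≤ Re λ₁. -/

import Mathlib

open Complex in
/-- Re of principal square root is nonnegative. -/
lemma sqrt_re_nonneg_aux (z : ℂ) : 0 ≤ (z ^ ((1 : ℂ) / 2)).re := by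
  by_cases hz : z = 0
  · simp [hz, Complex.zero_cpow (by norm_num : (1 : ℂ)/2 ≠ 0)]
  · rw [Complex.cpow_def_of_ne_zero hz, Complex.exp_re]
    apply mul_nonneg (Real.exp_pos _).le
    have him : (Complex.log z * (1/2)).im = z.arg / 2 := by
      simp [Complex.log_im, Complex.mul_im, Complex.log_re]
      ring
    rw [him]
    apply Real.cos_nonneg_of_mem_Icc
    constructor
    · linarith [Complex.neg_pi_lt_arg z]
    · linarith [Complex.arg_le_pi z]

open Complex in
/-- square of principal square root. -/
lemma sqrt_sq_aux (z : ℂ) : (z ^ ((1 : ℂ) / 2)) ^ 2 = z := by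
  have : ((1 : ℂ)/2) = (((2:ℕ) : ℂ))⁻¹ := by norm_num
  rw [this]
  exact Complex.cpow_nat_inv_pow z two_ne_zero

open Complex in
/-- Spectral ordering of the coupled element dynamics: with
`z = 1 + γ̄[−(1+𝔠²)sin²(k/2) − 2i𝔠 sin(k/2)cos(k/2)]` and principal square
root `√z = z^{1/2}`, one has `0 ≤ Re √z ≤ 1`, so the eigenvalues
`λ₁ = 2d(−1 + √z)` and `λ₃ = 2d(−1 − √z)` satisfy `Re λ₁ ≤ 0` and
`Re λ₃ ≤ Re λ₁`. -/
theorem stmt9 (k gam frakc d : ℝ) (hk : |k| ≤ Real.pi)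
    (hgam : gam ∈ Set.Icc (0 : ℝ) 1) (hd : 0 < d) :
    let z : ℂ := 1 + (gam : ℂ) *
      (-( (1 + frakc ^ 2 : ℝ) * Real.sin (k / 2) ^ 2 : ℝ)
        - 2 * I * (frakc : ℂ) * (Real.sin (k / 2) : ℂ) * (Real.cos (k / 2) : ℂ))
    let sqrtz : ℂ := z ^ ((1 : ℂ) / 2)
    0 ≤ sqrtz.re ∧ sqrtz.re ≤ 1 ∧
      ((2 * d : ℂ) * (-1 + sqrtz)).re ≤ 0 ∧
      ((2 * d : ℂ) * (-1 - sqrtz)).re ≤ ((2 * d : ℂ) * (-1 + sqrtz)).re := by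
  intro z sqrtz
  obtain ⟨hg0, hg1⟩ := hgam
  have hre0 : 0 ≤ sqrtz.re := sqrt_re_nonneg_aux z
  have hsq : sqrtz ^ 2 = z := sqrt_sq_aux z
  clear_value sqrtz
  set s := Real.sin (k / 2) with hs
  set c := Real.cos (k / 2) with hc
  set a : ℝ := gam * ((1 + frakc ^ 2) * s ^ 2) with ha
  set b : ℝ := 2 * gam * frakc * s * c with hb
  have ha0 : 0 ≤ a := by
    apply mul_nonneg hg0
    positivity
  have hzre : z.re = 1 - a := by
    simp only [z, ha, Complex.add_re, Complex.add_im, Complex.mul_re, Complex.mul_im,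
      Complex.sub_re, Complex.sub_im, Complex.neg_re, Complex.neg_im,
      Complex.ofReal_re, Complex.ofReal_im, Complex.I_re, Complex.I_im,
      Complex.one_re, Complex.one_im, Complex.re_ofNat, Complex.im_ofNat]
    ring
  have hzim : z.im = -b := by
    simp only [z, hb, Complex.add_re, Complex.add_im, Complex.mul_re, Complex.mul_im,
      Complex.sub_re, Complex.sub_im, Complex.neg_re, Complex.neg_im,
      Complex.ofReal_re, Complex.ofReal_im, Complex.I_re, Complex.I_im,
      Complex.one_re, Complex.one_im, Complex.re_ofNat, Complex.im_ofNat]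
    ring
  -- key bound : b^2 ≤ 4a
  have hsc : s ^ 2 + c ^ 2 = 1 := by rw [hs, hc]; exact Real.sin_sq_add_cos_sq (k / 2)
  clear_value z
  clear_value b a c s
  have hb2 : b ^ 2 ≤ 4 * a := by
    have hc2 : c ^ 2 ≤ 1 := by nlinarith [sq_nonneg s]
    have h1 : b ^ 2 = 4 * (gam * gam) * (frakc ^ 2 * s ^ 2) * c ^ 2 := by rw [hb]; ring
    have h2 : gam * gam ≤ gam := by nlinarith
    have hfs : 0 ≤ frakc ^ 2 * s ^ 2 := by positivity
    nlinarith [sq_nonneg (frakc * s), mul_nonneg (mul_nonneg hg0 hg0) hfs,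
      mul_nonneg hg0 hfs, mul_nonneg hg0 (sq_nonneg s)]
  -- |z| ≤ 1 + a
  have habs : ‖z‖ ≤ 1 + a := by
    have hsq : ‖z‖ ^ 2 ≤ (1 + a) ^ 2 := by
      rw [Complex.sq_norm, Complex.normSq_apply, hzre, hzim]
      nlinarith
    have h1a : (0:ℝ) ≤ 1 + a := by linarith
    nlinarith [norm_nonneg z]
  have hns : Complex.normSq sqrtz = ‖z‖ := by
    rw [Complex.normSq_eq_norm_sq, ← norm_pow, hsq]
  have hre2 : (sqrtz ^ 2).re = z.re := by rw [hsq]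
  have hresq : 2 * sqrtz.re ^ 2 = ‖z‖ + z.re := by
    have h1 : (sqrtz ^ 2).re = sqrtz.re ^ 2 - sqrtz.im ^ 2 := by
      rw [pow_two, Complex.mul_re]; ring
    have h2 : Complex.normSq sqrtz = sqrtz.re ^ 2 + sqrtz.im ^ 2 := by
      rw [Complex.normSq_apply]; ring
    linarith [hre2, hns, h1, h2]
  have hre1 : sqrtz.re ≤ 1 := by
    have : 2 * sqrtz.re ^ 2 ≤ 2 := by rw [hresq, hzre]; linarith
    nlinarith
  have e1 : ((2 * d : ℂ) * (-1 + sqrtz)).re = 2 * d * (-1 + sqrtz.re) := by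
    simp only [Complex.mul_re, Complex.mul_im, Complex.add_re, Complex.add_im,
      Complex.neg_re, Complex.neg_im, Complex.one_re, Complex.one_im,
      Complex.ofReal_re, Complex.ofReal_im, Complex.re_ofNat, Complex.im_ofNat]
    ring
  have e2 : ((2 * d : ℂ) * (-1 - sqrtz)).re = 2 * d * (-1 - sqrtz.re) := by
    simp only [Complex.mul_re, Complex.mul_im, Complex.sub_re, Complex.sub_im,
      Complex.neg_re, Complex.neg_im, Complex.one_re, Complex.one_im,
      Complex.ofReal_re, Complex.ofReal_im, Complex.re_ofNat, Complex.im_ofNat]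
    ring
  clear hsq hns hre2 hresq hzre hzim hb2 habs ha0 hg0 hg1 hk
  refine ⟨hre0, hre1, ?_, ?_⟩
  · rw [e1]; nlinarith
  · rw [e1, e2]; nlinarith
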